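/- Let T > 0 and let g : [0,T] → [0,∞) be measurable with G(T) := ∫₀ᵀ g(t) dt ∈ (0,∞). Let (X_i)_{i≥1} be independent identically distributed random variables with values in [0,T] whose common law has density g(t)/G(T) with respect to Lebesgue measure on [0,T], and set S_n = X_1 + ⋯ + X_n and a_n = G(T)^n P(S_n ≤ T). Then Σ_{n≥1} a_n^{1/p} < ∞ for every p ≥ 1. -/

import Mathlib

open MeasureTheory Set

/-- Summability of the constants `a_n = G(T)^n P(S_n ≤ T)` in the Gronwall-type
Lemma A.1: if `(X_i)` are i.i.d. with density `g/G(T)` on `[0,T]` and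
`S_n = X_1 + ⋯ + X_n`, then `Σ_{n≥1} a_n^{1/p} < ∞` for every `p ≥ 1`. -/
theorem stmt_3 {Ω : Type*} [MeasurableSpace Ω] (P : Measure Ω) [IsProbabilityMeasure P]
    (T : ℝ) (hT : 0 < T) (g : ℝ → ℝ) (hg_meas : Measurable g)
    (hg_nonneg : ∀ t ∈ Icc (0 : ℝ) T, 0 ≤ g t)
    (GT : ℝ) (hGT : GT = ∫ t in Icc (0 : ℝ) T, g t) (hGT_pos : 0 < GT)
    (X : ℕ → Ω → ℝ) (hX_meas : ∀ i, Measurable (X i))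
    (hX_range : ∀ i, ∀ ω, X i ω ∈ Icc (0 : ℝ) T)
    (hX_indep : ProbabilityTheory.iIndepFun X P)
    (hX_law : ∀ i, Measure.map (X i) P
      = (volume.restrict (Icc (0 : ℝ) T)).withDensity (fun t => ENNReal.ofReal (g t / GT)))
    (S : ℕ → Ω → ℝ) (hS : ∀ n ω, S n ω = ∑ i ∈ Finset.range n, X i ω)
    (a : ℕ → ℝ) (ha : ∀ n, a n = GT ^ n * (P {ω | S n ω ≤ T}).toReal) :
    ∀ p : ℝ, 1 ≤ p → Summable (fun n : ℕ => a (n + 1) ^ (1 / p)) := by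
  -- g is integrable on [0,T] (else GT = 0)
  have hg_int : IntegrableOn g (Icc (0 : ℝ) T) volume := by
    by_contra h
    rw [hGT, integral_undef h] at hGT_pos
    exact lt_irrefl _ hGT_pos
  -- the Laplace transform F n = ∫ exp(-n t) g t tends to 0
  set F : ℕ → ℝ := fun n => ∫ t in Icc (0 : ℝ) T, Real.exp (-(n : ℝ) * t) * g t with hF
  have hF_tendsto : Filter.Tendsto F Filter.atTop (nhds 0) := by
    have h0 : (0 : ℝ) = ∫ t in Icc (0 : ℝ) T, (0 : ℝ) := by simp
    rw [h0]
    apply tendsto_integral_of_dominated_convergence g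
    · intro n
      exact ((((measurable_const).mul measurable_id).exp.mul hg_meas)).aestronglyMeasurable
    · exact hg_int
    · intro n
      refine (ae_restrict_iff' measurableSet_Icc).mpr (Filter.Eventually.of_forall ?_)
      intro t ht
      have h1 : Real.exp (-(n : ℝ) * t) ≤ 1 := by
        rw [Real.exp_le_one_iff]
        have : (0 : ℝ) ≤ (n : ℝ) * t := mul_nonneg (Nat.cast_nonneg n) ht.1
        linarith
      have h2 : 0 ≤ g t := hg_nonneg t ht
      rw [Real.norm_eq_abs, abs_mul, abs_of_pos (Real.exp_pos _), abs_of_nonneg h2]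
      nlinarith [Real.exp_pos (-(n : ℝ) * t)]
    · have hne : ∀ᵐ t ∂(volume.restrict (Icc (0 : ℝ) T)), t ≠ 0 := by
        refine ae_iff.mpr ?_
        have : {t : ℝ | ¬ t ≠ 0} = {0} := by ext t; simp
        rw [this]
        exact le_antisymm (le_trans (Measure.restrict_le_self _) (by simp)) zero_le
      filter_upwards [hne, ae_restrict_mem measurableSet_Icc] with t ht0 htI
      have htpos : 0 < t := lt_of_le_of_ne htI.1 (Ne.symm ht0)
      have : Filter.Tendsto (fun n : ℕ => Real.exp (-t) ^ n * g t) Filter.atTop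
          (nhds (0 * g t)) := by
        refine Filter.Tendsto.mul_const _ ?_
        exact tendsto_pow_atTop_nhds_zero_of_lt_one (Real.exp_pos _).le
          (Real.exp_lt_one_iff.mpr (by linarith))
      simpa [← Real.exp_nat_mul, mul_comm, mul_left_comm, neg_mul, mul_neg] using this
  -- choose N with F N < 1/2
  obtain ⟨N, hN⟩ : ∃ N : ℕ, F N < 1 / 2 := by
    have := (hF_tendsto.eventually (gt_mem_nhds (by norm_num : (0 : ℝ) < 1 / 2)))
    exact this.exists
  set θ : ℝ := (N : ℝ) with hθ
  have hθ0 : 0 ≤ θ := Nat.cast_nonneg N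
  set c : ℝ := F N with hc
  have hc0 : 0 ≤ c := by
    apply setIntegral_nonneg measurableSet_Icc
    intro t ht
    exact mul_nonneg (Real.exp_pos _).le (hg_nonneg t ht)
  have hc1 : c < 1 := lt_trans hN (by norm_num)
  -- the moment generating function of each X i
  have hmgf : ∀ i (t : ℝ), ProbabilityTheory.mgf (X i) P t
      = ∫ s in Icc (0 : ℝ) T, (g s / GT) * Real.exp (t * s) := by
    intro i t
    have hcont : Continuous fun s : ℝ => Real.exp (t * s) :=
      (continuous_const.mul continuous_id).rexp
    have h1 : ProbabilityTheory.mgf (X i) P t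
        = ∫ s, Real.exp (t * s) ∂(Measure.map (X i) P) := by
      rw [ProbabilityTheory.mgf,
        integral_map (hX_meas i).aemeasurable hcont.aestronglyMeasurable]
    rw [h1, hX_law i]
    have hd : (fun s : ℝ => ENNReal.ofReal (g s / GT))
        = fun s : ℝ => ((Real.toNNReal (g s / GT) : NNReal) : ENNReal) := rfl
    rw [hd, integral_withDensity_eq_integral_smul (hg_meas.div_const GT).real_toNNReal]
    apply setIntegral_congr_fun measurableSet_Icc
    intro s hs
    have : (0 : ℝ) ≤ g s / GT := div_nonneg (hg_nonneg s hs) hGT_pos.le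
    simp [NNReal.smul_def, Real.coe_toNNReal', max_eq_left this]
  have hmgfXi : ∀ i, ProbabilityTheory.mgf (X i) P (-θ) = c / GT := by
    intro i
    rw [hmgf i (-θ), eq_div_iff hGT_pos.ne', ← integral_mul_const]
    refine setIntegral_congr_fun measurableSet_Icc fun s _ => ?_
    field_simp
    rw [hθ, mul_comm s]
  -- S n as a sum of functions, measurability and nonnegativity
  have hSfun : ∀ n, S n = ∑ i ∈ Finset.range n, X i := by
    intro n
    funext ω
    rw [hS]
    simp
  have hS_meas : ∀ n, Measurable (S n) := by
    intro n
    rw [show S n = fun ω => ∑ i ∈ Finset.range n, X i ω from funext (hS n)]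
    exact Finset.measurable_sum _ fun i _ => hX_meas i
  have hS_nonneg : ∀ n ω, 0 ≤ S n ω := by
    intro n ω
    rw [hS]
    exact Finset.sum_nonneg fun i _ => (hX_range i ω).1
  -- integrability of exp(-θ * S n)
  have hint : ∀ n, Integrable (fun ω => Real.exp (-θ * S n ω)) P := by
    intro n
    refine Integrable.mono' (integrable_const 1)
      (((hS_meas n).const_mul (-θ)).exp.aestronglyMeasurable)
      (Filter.Eventually.of_forall fun ω => ?_)
    rw [Real.norm_eq_abs, abs_of_pos (Real.exp_pos _), Real.exp_le_one_iff]
    have := mul_nonneg hθ0 (hS_nonneg n ω)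
    linarith
  -- mgf of S n
  have hmgfS : ∀ n, ProbabilityTheory.mgf (S n) P (-θ) = (c / GT) ^ n := by
    intro n
    rw [hSfun, ProbabilityTheory.iIndepFun.mgf_sum hX_indep hX_meas (Finset.range n)]
    rw [Finset.prod_congr rfl fun i _ => hmgfXi i, Finset.prod_const, Finset.card_range]
  -- Chernoff bound
  have hbound : ∀ n, a n ≤ Real.exp (θ * T) * c ^ n := by
    intro n
    rw [ha]
    have hcher := ProbabilityTheory.measure_le_le_exp_mul_mgf (X := S n) (μ := P) T
      (neg_nonpos.mpr hθ0) (hint n)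
    rw [hmgfS n, neg_neg] at hcher
    have h2 : GT ^ n * (P {ω | S n ω ≤ T}).toReal
        ≤ GT ^ n * (Real.exp (θ * T) * (c / GT) ^ n) :=
      mul_le_mul_of_nonneg_left hcher (pow_nonneg hGT_pos.le n)
    refine h2.trans_eq ?_
    rw [← mul_assoc, mul_comm (GT ^ n), mul_assoc, ← mul_pow,
      mul_div_cancel₀ _ hGT_pos.ne']
  have han : ∀ n, 0 ≤ a n := by
    intro n
    rw [ha]
    exact mul_nonneg (pow_nonneg hGT_pos.le n) ENNReal.toReal_nonneg
  -- conclude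
  intro p hp
  have hp0 : (0 : ℝ) < p := lt_of_lt_of_le one_pos hp
  have hinv : (0 : ℝ) < 1 / p := by positivity
  set r : ℝ := c ^ (1 / p) with hr
  have hr0 : 0 ≤ r := Real.rpow_nonneg hc0 _
  have hr1 : r < 1 := by
    rcases eq_or_lt_of_le hc0 with h | h
    · rw [hr, ← h, Real.zero_rpow hinv.ne']
      norm_num
    · exact Real.rpow_lt_one hc0 hc1 hinv
  have hkey : ∀ n : ℕ, a (n + 1) ^ (1 / p)
      ≤ (Real.exp (θ * T) ^ (1 / p) * r) * r ^ n := by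
    intro n
    have h1 : a (n + 1) ^ (1 / p) ≤ (Real.exp (θ * T) * c ^ (n + 1)) ^ (1 / p) :=
      Real.rpow_le_rpow (han _) (hbound (n + 1)) hinv.le
    refine h1.trans_eq ?_
    rw [Real.mul_rpow (Real.exp_pos _).le (pow_nonneg hc0 _)]
    have h2 : (c ^ (n + 1) : ℝ) ^ (1 / p) = r ^ (n + 1) := by
      rw [← Real.rpow_natCast c (n + 1), ← Real.rpow_natCast r (n + 1), hr,
        ← Real.rpow_mul hc0, ← Real.rpow_mul hc0, mul_comm]
    rw [h2, pow_succ, mul_comm (r ^ n) r, ← mul_assoc]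
  exact Summable.of_nonneg_of_le (fun n => Real.rpow_nonneg (han _) _) hkey
    ((summable_geometric_of_lt_one hr0 hr1).mul_left _)
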